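/- The coproduct of inclusions of boundary spheres into disks satisfies the surjectivity-onto-closed-sets condition: let X = ⨆_{k ∈ K} D^{n_k} with n_k ≥ 1 and A = ⨆_{k ∈ K} S^{n_k - 1} ⊆ X. Then for every closed subset C ⊆ A there exists B ⊆ X \ A such that (c_X B) ∩ A = C, where c_X is the closure operator of X (componentwise topological closure). -/

import Mathlib

set_option maxHeartbeats 1000000 in
/-- The coproduct of the inclusions of boundary spheres into disks satisfies the
condition of Theorem 4.1(2): for `X = ⨆_{k ∈ K} D^{n_k}` (with the componentwise
topological closure `c_X`) and `A = ⨆_{k ∈ K} S^{n_k - 1}` the coproduct of boundary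
spheres, every closed subset `C ⊆ A` (in the subspace closure) is of the form
`(c_X B) ∩ A` for some `B ⊆ X \ A`. -/
theorem spheres_in_disks_condition {K : Type*} (n : K → ℕ) (hn : ∀ k, 1 ≤ n k) :
    letI X : Type _ := (k : K) × ↥(Metric.closedBall (0 : EuclideanSpace ℝ (Fin (n k))) 1)
    letI A : Set X := {p | ‖(p.2 : EuclideanSpace ℝ (Fin (n p.1)))‖ = 1}
    letI cX : Set X → Set X := fun S => {p | p.2 ∈ closure {x | (⟨p.1, x⟩ : X) ∈ S}}
    ∀ C : Set X, C ⊆ A → cX C ∩ A = C → ∃ B : Set X, B ⊆ Aᶜ ∧ cX B ∩ A = C := by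
  intro C hCA hCclosed
  classical
  set B : Set ((k : K) × ↥(Metric.closedBall (0 : EuclideanSpace ℝ (Fin (n k))) 1)) := {p | ∃ x : EuclideanSpace ℝ (Fin (n p.1)),
      (∃ hx : x ∈ Metric.closedBall (0 : EuclideanSpace ℝ (Fin (n p.1))) 1,
        (⟨p.1, ⟨x, hx⟩⟩ : (k : K) × ↥(Metric.closedBall (0 : EuclideanSpace ℝ (Fin (n k))) 1)) ∈ C) ∧
      ∃ t, t ∈ Set.Ico (1/2 : ℝ) 1 ∧
        (p.2 : EuclideanSpace ℝ (Fin (n p.1))) = t • x} with hBdef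
  refine ⟨B, ?_, ?_⟩
  · -- B ⊆ Aᶜ
    rintro p ⟨x, ⟨hx, hxC⟩, t, ht, hpt⟩ hpA
    have hx1 : ‖x‖ = 1 := hCA hxC
    have hnorm : ‖(p.2 : EuclideanSpace ℝ (Fin (n p.1)))‖ = t := by
      rw [hpt, norm_smul, hx1, mul_one, Real.norm_eq_abs, abs_of_nonneg (by linarith [ht.1])]
    rw [hpA] at hnorm
    linarith [ht.2]
  · ext p
    constructor
    · rintro ⟨hpB, hpA⟩
      -- hard direction: p.2 ∈ closure B_k and ‖p.2‖ = 1 imply p ∈ C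
      have hpA' : ‖(p.2 : EuclideanSpace ℝ (Fin (n p.1)))‖ = 1 := hpA
      obtain ⟨u, hu, hulim⟩ := mem_closure_iff_seq_limit.mp hpB
      choose x h1 t ht heq using hu
      -- each x i has norm 1 and t i = ‖u i‖
      have hx1 : ∀ i, ‖x i‖ = 1 := fun i => hCA (h1 i).choose_spec
      have hti : ∀ i, ‖(u i : EuclideanSpace ℝ (Fin (n p.1)))‖ = t i := by
        intro i
        rw [heq i, norm_smul, hx1 i, mul_one, Real.norm_eq_abs, abs_of_nonneg (by linarith [(ht i).1])]
      have hxval : ∀ i, x i = ‖(u i : EuclideanSpace ℝ (Fin (n p.1)))‖⁻¹ •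
          (u i : EuclideanSpace ℝ (Fin (n p.1))) := by
        intro i
        rw [hti i, heq i, smul_smul, inv_mul_cancel₀ (by linarith [(ht i).1]), one_smul]
      have hucoe : Filter.Tendsto (fun i => (u i : EuclideanSpace ℝ (Fin (n p.1))))
          Filter.atTop (nhds (p.2 : EuclideanSpace ℝ (Fin (n p.1)))) :=
        tendsto_subtype_rng.mp hulim
      have hnormlim : Filter.Tendsto
          (fun i => ‖(u i : EuclideanSpace ℝ (Fin (n p.1)))‖⁻¹) Filter.atTop (nhds 1) := by
        have := (hucoe.norm).inv₀ (by rw [hpA']; norm_num)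
        simpa [hpA'] using this
      have hxlim : Filter.Tendsto (fun i => x i) Filter.atTop
          (nhds (p.2 : EuclideanSpace ℝ (Fin (n p.1)))) := by
        have := hnormlim.smul hucoe
        rw [one_smul] at this
        simpa [← hxval] using this
      -- lift to the subtype
      have hv : Filter.Tendsto (fun i => (⟨x i, (h1 i).choose⟩ :
          ↥(Metric.closedBall (0 : EuclideanSpace ℝ (Fin (n p.1))) 1)))
          Filter.atTop (nhds p.2) := by
        rw [tendsto_subtype_rng]
        exact hxlim
      have hmemC : p.2 ∈ closure {y | (⟨p.1, y⟩ : (k : K) × ↥(Metric.closedBall (0 : EuclideanSpace ℝ (Fin (n k))) 1)) ∈ C} := by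
        apply mem_closure_of_tendsto hv
        filter_upwards with i
        exact (h1 i).choose_spec
      rw [← hCclosed]
      exact ⟨hmemC, hpA⟩
    · intro hpC
      have hpA := hCA hpC
      have hpA' : ‖(p.2 : EuclideanSpace ℝ (Fin (n p.1)))‖ = 1 := hpA
      refine ⟨?_, hpA⟩
      -- p.2 ∈ closure B_k : approach along the radius
      apply mem_closure_iff_seq_limit.mpr
      have hmem : ∀ i : ℕ, (1 - 1/(i+2) : ℝ) • (p.2 : EuclideanSpace ℝ (Fin (n p.1)))
          ∈ Metric.closedBall (0 : EuclideanSpace ℝ (Fin (n p.1))) 1 := by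
        intro i
        rw [Metric.mem_closedBall, dist_zero_right, norm_smul, hpA', mul_one]
        have h2 : (0:ℝ) < 1/(i+2) := by positivity
        have hi : (0:ℝ) ≤ i := Nat.cast_nonneg i
        have h3 : (1:ℝ)/(i+2) ≤ 1 := by
          rw [div_le_one (by positivity)]
          linarith
        rw [Real.norm_eq_abs, abs_of_nonneg (by linarith)]
        linarith
      refine ⟨fun i => ⟨(1 - 1/(i+2) : ℝ) • (p.2 : _), hmem i⟩, ?_, ?_⟩
      · intro i
        refine ⟨(p.2 : EuclideanSpace ℝ (Fin (n p.1))), ⟨p.2.2, hpC⟩,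
          (1 - 1/(i+2) : ℝ), ⟨?_, ?_⟩, rfl⟩
        · have hi : (0:ℝ) ≤ i := Nat.cast_nonneg i
          have h3 : (1:ℝ)/(i+2) ≤ 1/2 := by
            rw [div_le_div_iff₀ (by positivity) (by norm_num)]
            linarith
          linarith
        · have h2 : (0:ℝ) < 1/(i+2) := by positivity
          linarith
      · rw [tendsto_subtype_rng]
        have h1 : Filter.Tendsto (fun i : ℕ => (1 - 1/(i+2) : ℝ)) Filter.atTop (nhds 1) := by
          have : Filter.Tendsto (fun i : ℕ => (1/(i+2) : ℝ)) Filter.atTop (nhds 0) := by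
            have ht : Filter.Tendsto (fun i : ℕ => ((i:ℝ)+2)) Filter.atTop Filter.atTop :=
              Filter.tendsto_atTop_add_const_right _ _ tendsto_natCast_atTop_atTop
            simpa [one_div, Pi.inv_def] using ht.inv_tendsto_atTop
          have h := (tendsto_const_nhds (x := (1:ℝ)) (f := Filter.atTop (α := ℕ))).sub this
          simpa using h
        have := h1.smul (tendsto_const_nhds (x := (p.2 : EuclideanSpace ℝ (Fin (n p.1)))))
        simpa using this
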